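/- arXiv:2202.00371 — 4 statements merged into one kernel-verified Lean document; each statement's English description precedes it below -/
import Mathlib

section
/- Let E be a locally convex space (or just a topological vector space) and C ⊆ E a closed convex set. Then C has convex countable tightness (i.e., for every convex D ⊆ C and every x in the closure of D there is a countable D₀ ⊆ D with x in the closure of D₀) if and only if every ω-closed convex subset of C is closed, where a set D is ω-closed if the closure of every countable subset of D is contained in D. -/
/-- A convex set `C` in a topological vector space has *convex countable tightness* if
for every convex `D ⊆ C` and every `x` in the closure of `D` there is a countable
`D₀ ⊆ D` with `x` in the closure of `D₀`. -/
def ConvexCountableTightness {E : Type*} [AddCommGroup E] [Module ℝ E]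
    [TopologicalSpace E] (C : Set E) : Prop :=
  ∀ D ⊆ C, Convex ℝ D → ∀ x ∈ closure D,
    ∃ D₀ ⊆ D, D₀.Countable ∧ x ∈ closure D₀

/-- A subset `D` of a topological space is *ω-closed* if the closure of every countable
subset of `D` is contained in `D`. -/
def OmegaClosed {E : Type*} [TopologicalSpace E] (D : Set E) : Prop :=
  ∀ D₀ ⊆ D, D₀.Countable → closure D₀ ⊆ D

/-- Let `E` be a (real, locally convex) topological vector space and
`C ⊆ E` a closed convex set. Then `C` has convex countable tightness if and only if
every ω-closed convex subset of `C` is closed. -/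
theorem convexCountableTightness_iff_omegaClosed_convex_isClosed
    {E : Type*} [AddCommGroup E] [Module ℝ E] [TopologicalSpace E]
    [IsTopologicalAddGroup E] [ContinuousSMul ℝ E] [LocallyConvexSpace ℝ E]
    (C : Set E) (hCclosed : IsClosed C) (hCconv : Convex ℝ C) :
    ConvexCountableTightness C ↔
      ∀ D ⊆ C, Convex ℝ D → OmegaClosed D → IsClosed D := by
  constructor
  · intro hcct D hDC hDconv hDω
    refine isClosed_of_closure_subset fun x hx => ?_
    obtain ⟨D₀, hD₀, hcnt, hxcl⟩ := hcct D hDC hDconv x hx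
    exact hDω D₀ hD₀ hcnt hxcl
  · intro h D hDC hDconv x hx
    set T : Set E := {y | ∃ S ⊆ D, S.Countable ∧ y ∈ closure S} with hT
    have hDT : D ⊆ T := fun y hy =>
      ⟨{y}, by simpa using hy, Set.countable_singleton y, subset_closure rfl⟩
    have hTD : T ⊆ closure D := by
      rintro y ⟨S, hSD, -, hycl⟩
      exact closure_mono hSD hycl
    have hTC : T ⊆ C := hTD.trans (hCclosed.closure_subset_iff.mpr hDC)
    have hTconv : Convex ℝ T := by
      rintro y₁ ⟨S₁, hS₁, hc₁, hy₁⟩ y₂ ⟨S₂, hS₂, hc₂, hy₂⟩ a b ha hb hab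
      refine ⟨(fun p : E × E => a • p.1 + b • p.2) '' (S₁ ×ˢ S₂), ?_,
        (hc₁.prod hc₂).image _, ?_⟩
      · rintro z ⟨⟨u, v⟩, ⟨hu, hv⟩, rfl⟩
        exact hDconv (hS₁ hu) (hS₂ hv) ha hb hab
      · have hcont : Continuous fun p : E × E => a • p.1 + b • p.2 :=
          (continuous_fst.const_smul a).add (continuous_snd.const_smul b)
        have hmem : (y₁, y₂) ∈ closure (S₁ ×ˢ S₂) := by
          rw [closure_prod_eq]; exact ⟨hy₁, hy₂⟩
        exact image_closure_subset_closure_image hcont ⟨(y₁, y₂), hmem, rfl⟩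
    have hTω : OmegaClosed T := by
      intro S hST hScnt z hz
      have := hScnt.to_subtype
      choose f hf1 hf2 hf3 using fun (y : S) => hST y.2
      refine ⟨⋃ y : S, f y, Set.iUnion_subset fun y => hf1 y,
        Set.countable_iUnion fun y => hf2 y, ?_⟩
      have hsub : S ⊆ closure (⋃ y : S, f y) := fun y hy =>
        closure_mono (Set.subset_iUnion _ ⟨y, hy⟩) (hf3 ⟨y, hy⟩)
      exact closure_minimal hsub isClosed_closure hz
    have hTclosed : IsClosed T := h T hTC hTconv hTω
    exact hTclosed.closure_subset_iff.mpr hDT hx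
end

section
/- Let E₁, E₂ be locally convex spaces and C₁ ⊆ E₁, C₂ ⊆ E₂ compact convex sets, each having convex countable tightness. Then the product C₁ × C₂ has convex countable tightness in E₁ × E₂. -/
open Set Filter Topology

/-- Rational points of `[0,1]` are dense in `[0,1]`. -/
lemma aux_rat_Icc_dense {t : ℝ} (ht : t ∈ Set.Icc (0:ℝ) 1) :
    t ∈ closure ((fun q : ℚ => (q:ℝ)) '' {q : ℚ | 0 ≤ q ∧ q ≤ 1}) := by
  rcases eq_or_lt_of_le ht.1 with h0 | h0
  · exact subset_closure ⟨0, ⟨le_refl 0, by norm_num⟩, by simp [← h0]⟩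
  · rw [Metric.mem_closure_iff]
    intro ε hε
    obtain ⟨q, hq1, hq2⟩ := exists_rat_btwn (show max 0 (t - ε) < t from
      max_lt h0 (by linarith))
    refine ⟨(q:ℝ), ⟨q, ⟨?_, ?_⟩, rfl⟩, ?_⟩
    · exact_mod_cast le_of_lt (lt_of_le_of_lt (le_max_left _ _) hq1)
    · exact_mod_cast le_trans (le_of_lt hq2) ht.2
    · have h3 : t - ε ≤ max 0 (t - ε) := le_max_right _ _
      rw [Real.dist_eq, abs_sub_lt_iff]
      constructor <;> nlinarith [hq1, hq2]

/-- There is a countable subset of the convex hull of a countable set that is dense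
in the convex hull. -/
lemma aux_exists_countable_ratHull {E : Type*} [AddCommGroup E] [Module ℝ E]
    [TopologicalSpace E] [ContinuousAdd E] [ContinuousSMul ℝ E]
    (S : Set E) (hS : S.Countable) :
    ∃ T : Set E, T ⊆ convexHull ℝ S ∧ T.Countable ∧ convexHull ℝ S ⊆ closure T := by
  classical
  set step : Set E → Set E := fun A =>
    A ∪ (fun p : ℚ × E × E => (p.1 : ℝ) • p.2.1 + (1 - (p.1 : ℝ)) • p.2.2) ''
      (({q : ℚ | 0 ≤ q ∧ q ≤ 1}) ×ˢ (A ×ˢ A)) with hstep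
  set Q : ℕ → Set E := fun n => step^[n] S with hQ
  have hQzero : Q 0 = S := rfl
  have hQsucc : ∀ n, Q (n + 1) = step (Q n) := fun n =>
    Function.iterate_succ_apply' step n S
  have hmono : Monotone Q := monotone_nat_of_le_succ fun n => by
    rw [hQsucc]; exact subset_union_left
  have hcount : ∀ n, (Q n).Countable := by
    intro n; induction n with
    | zero => exact hS
    | succ n ih =>
      rw [hQsucc]
      exact ih.union (((Set.to_countable _).prod (ih.prod ih)).image _)
  have hhull : ∀ n, Q n ⊆ convexHull ℝ S := by
    intro n; induction n with
    | zero => exact subset_convexHull ℝ S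
    | succ n ih =>
      rw [hQsucc]
      rintro x (hx | ⟨⟨q, a, b⟩, ⟨⟨hq0, hq1⟩, ha, hb⟩, rfl⟩)
      · exact ih hx
      · exact (convex_convexHull ℝ S) (ih ha) (ih hb)
          (by exact_mod_cast hq0) (by simp; exact_mod_cast hq1) (by ring)
  set T := ⋃ n, Q n with hT
  have hTc : T.Countable := countable_iUnion hcount
  have hThull : T ⊆ convexHull ℝ S := iUnion_subset hhull
  have hST : S ⊆ T := hQzero ▸ subset_iUnion Q 0
  have hop : ∀ q : ℚ, 0 ≤ q → q ≤ 1 → ∀ a ∈ T, ∀ b ∈ T,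
      (q:ℝ) • a + (1 - (q:ℝ)) • b ∈ T := by
    intro q hq0 hq1 a ha b hb
    obtain ⟨m, hm⟩ := mem_iUnion.mp ha
    obtain ⟨n, hn⟩ := mem_iUnion.mp hb
    refine mem_iUnion.mpr ⟨max m n + 1, ?_⟩
    rw [hQsucc]
    exact Or.inr ⟨(q, a, b), ⟨⟨hq0, hq1⟩, hmono (le_max_left m n) hm,
      hmono (le_max_right m n) hn⟩, rfl⟩
  have hopcl : ∀ q : ℚ, 0 ≤ q → q ≤ 1 → ∀ a ∈ closure T, ∀ b ∈ closure T,
      (q:ℝ) • a + (1 - (q:ℝ)) • b ∈ closure T := by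
    intro q hq0 hq1 a ha b hb
    exact map_mem_closure₂ (f := fun a b : E => (q:ℝ) • a + (1 - (q:ℝ)) • b)
      (((continuous_fst.const_smul _).add (continuous_snd.const_smul _)))
      ha hb (hop q hq0 hq1)
  have hclconv : Convex ℝ (closure T) := by
    intro u hu v hv t s ht hs hts
    have hs' : s = 1 - t := by linarith
    subst hs'
    set g : ℝ → E := fun r => r • u + (1 - r) • v with hg
    have hgc : Continuous g :=
      (continuous_id.smul continuous_const).add
        ((continuous_const.sub continuous_id).smul continuous_const)
    have hdense := aux_rat_Icc_dense (t := t) ⟨ht, by linarith⟩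
    have himg : g '' ((fun q : ℚ => (q:ℝ)) '' {q : ℚ | 0 ≤ q ∧ q ≤ 1}) ⊆ closure T := by
      rintro _ ⟨_, ⟨q, ⟨hq0, hq1⟩, rfl⟩, rfl⟩
      exact hopcl q hq0 hq1 u hu v hv
    have h1 : g t ∈ closure (g '' ((fun q : ℚ => (q:ℝ)) '' {q : ℚ | 0 ≤ q ∧ q ≤ 1})) :=
      image_closure_subset_closure_image hgc ⟨t, hdense, rfl⟩
    have h2 := (closure_mono himg) h1
    rwa [closure_closure] at h2
  exact ⟨T, hThull, hTc, convexHull_min (hST.trans subset_closure) hclconv⟩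

/-- Step lemma: if `D ⊆ C₁ ×ˢ C₂` is convex and `x₁` is in the closure of the first
projection of `D`, then there are a countable `S ⊆ D` and `y' ∈ C₂` with `(x₁, y')`
in the closure of the convex hull of `S`. -/
lemma aux_step1 {E₁ E₂ : Type*} [AddCommGroup E₁] [Module ℝ E₁] [TopologicalSpace E₁]
    [IsTopologicalAddGroup E₁] [ContinuousSMul ℝ E₁]
    [AddCommGroup E₂] [Module ℝ E₂] [TopologicalSpace E₂]
    [IsTopologicalAddGroup E₂] [ContinuousSMul ℝ E₂]
    {C₁ : Set E₁} {C₂ : Set E₂}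
    (h₁c : IsCompact C₁) (h₂c : IsCompact C₂) (h₁ : ConvexCountableTightness C₁)
    {D : Set (E₁ × E₂)} (hD : D ⊆ C₁ ×ˢ C₂) (hDconv : Convex ℝ D)
    {x₁ : E₁} (hx : x₁ ∈ closure (Prod.fst '' D)) :
    ∃ S ⊆ D, S.Countable ∧ ∃ y' ∈ C₂, (x₁, y') ∈ closure (convexHull ℝ S) := by
  classical
  have hA : Prod.fst '' D ⊆ C₁ := by
    rintro a ⟨p, hp, rfl⟩; exact (hD hp).1
  have hAconv : Convex ℝ (Prod.fst '' D) := hDconv.linear_image (LinearMap.fst ℝ E₁ E₂)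
  obtain ⟨A₀, hA₀D, hA₀c, hxA₀⟩ := h₁ _ hA hAconv x₁ hx
  have hchoice : ∀ a : A₀, ∃ p : E₁ × E₂, p ∈ D ∧ p.1 = (a : E₁) := by
    rintro ⟨a, ha⟩
    obtain ⟨p, hp, hpa⟩ := hA₀D ha
    exact ⟨p, hp, hpa⟩
  choose f hfD hf1 using hchoice
  haveI := hA₀c.to_subtype
  set S : Set (E₁ × E₂) := Set.range f with hSdef
  have hSD : S ⊆ D := by rintro p ⟨a, rfl⟩; exact hfD a
  have hSc : S.Countable := countable_range f
  set K := closure (convexHull ℝ S) with hK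
  have hKD : convexHull ℝ S ⊆ D := convexHull_min hSD hDconv
  have hKcpt : IsCompact K :=
    ((h₁c.prod h₂c).closure).of_isClosed_subset isClosed_closure
      (closure_mono (hKD.trans hD))
  have hxK : x₁ ∈ closure (Prod.fst '' K) := by
    refine closure_mono ?_ hxA₀
    intro a ha
    exact ⟨f ⟨a, ha⟩, subset_closure (subset_convexHull ℝ S ⟨⟨a, ha⟩, rfl⟩), hf1 ⟨a, ha⟩⟩
  obtain ⟨k, hkK, hins⟩ :=
    (hKcpt.image continuous_fst).mem_closure_iff_exists_inseparable.mp hxK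
  obtain ⟨p, hpK, rfl⟩ := hkK
  have h1 : (x₁, p.2) ∈ K := by
    have hinsp : Inseparable (p.1, p.2) (x₁, p.2) := hins.prod (Inseparable.refl _)
    exact (hinsp.mem_closed_iff isClosed_closure).mp (by simpa using hpK)
  have hp2 : p.2 ∈ closure C₂ := by
    have hmem : p ∈ closure (C₁ ×ˢ C₂) := closure_mono (hKD.trans hD) hpK
    rw [closure_prod_eq] at hmem
    exact hmem.2
  obtain ⟨c, hcC, hinsc⟩ := h₂c.mem_closure_iff_exists_inseparable.mp hp2
  have h2 : (x₁, c) ∈ K := by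
    have hinsp : Inseparable (x₁, p.2) (x₁, c) := (Inseparable.refl _).prod hinsc.symm
    exact (hinsp.mem_closed_iff isClosed_closure).mp h1
  exact ⟨S, hSD, hSc, c, hcC, h2⟩

/-- If `C₁ ⊆ E₁` and `C₂ ⊆ E₂` are compact convex sets in locally convex
spaces, each having convex countable tightness, then `C₁ × C₂` has convex countable
tightness in `E₁ × E₂`. -/
theorem convexCountableTightness_prod
    {E₁ E₂ : Type*} [AddCommGroup E₁] [Module ℝ E₁] [TopologicalSpace E₁]
    [IsTopologicalAddGroup E₁] [ContinuousSMul ℝ E₁] [LocallyConvexSpace ℝ E₁]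
    [AddCommGroup E₂] [Module ℝ E₂] [TopologicalSpace E₂]
    [IsTopologicalAddGroup E₂] [ContinuousSMul ℝ E₂] [LocallyConvexSpace ℝ E₂]
    (C₁ : Set E₁) (C₂ : Set E₂)
    (h₁c : IsCompact C₁) (h₁conv : Convex ℝ C₁) (h₁ : ConvexCountableTightness C₁)
    (h₂c : IsCompact C₂) (h₂conv : Convex ℝ C₂) (h₂ : ConvexCountableTightness C₂) :
    ConvexCountableTightness (C₁ ×ˢ C₂) := by
  classical
  intro D hD hDconv x hx
  set G : Set E₂ := {y : E₂ | y ∈ C₂ ∧ ∃ S : Set (E₁ × E₂),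
    S ⊆ D ∧ S.Countable ∧ (x.1, y) ∈ closure (convexHull ℝ S)} with hGdef
  have hGsub : G ⊆ C₂ := fun y hy => hy.1
  have hGconv : Convex ℝ G := by
    rintro a ⟨haC, Sa, hSaD, hSac, haK⟩ b ⟨hbC, Sb, hSbD, hSbc, hbK⟩ t s ht hs hts
    refine ⟨h₂conv haC hbC ht hs hts, Sa ∪ Sb, union_subset hSaD hSbD,
      hSac.union hSbc, ?_⟩
    have hconv : Convex ℝ (closure (convexHull ℝ (Sa ∪ Sb))) :=
      (convex_convexHull ℝ _).closure
    have h1 : (x.1, a) ∈ closure (convexHull ℝ (Sa ∪ Sb)) :=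
      closure_mono (convexHull_mono subset_union_left) haK
    have h2 : (x.1, b) ∈ closure (convexHull ℝ (Sa ∪ Sb)) :=
      closure_mono (convexHull_mono subset_union_right) hbK
    have hx1 : t • x.1 + s • x.1 = x.1 := by rw [← add_smul, hts, one_smul]
    have heq : t • ((x.1, a) : E₁ × E₂) + s • ((x.1, b) : E₁ × E₂)
        = (x.1, t • a + s • b) := by
      rw [Prod.smul_mk, Prod.smul_mk, Prod.mk_add_mk, hx1]
    rw [← heq]
    exact hconv h1 h2 ht hs hts
  have hGcl : x.2 ∈ closure G := by
    rw [mem_closure_iff_nhds]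
    intro U hU
    obtain ⟨W, ⟨hWnhds, hWclosed⟩, hWU⟩ := (closed_nhds_basis x.2).mem_iff.mp hU
    obtain ⟨V, ⟨hVnhds, hVconv⟩, hVW⟩ :=
      (LocallyConvexSpace.convex_basis (𝕜 := ℝ) x.2).mem_iff.mp hWnhds
    set Vc := closure V with hVc
    have hVcU : Vc ⊆ U := (closure_minimal hVW hWclosed).trans hWU
    have hVcnhds : Vc ∈ 𝓝 x.2 := mem_of_superset hVnhds subset_closure
    have hVcconv : Convex ℝ Vc := hVconv.closure
    have hVcclosed : IsClosed Vc := isClosed_closure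
    set D' := D ∩ (Set.univ ×ˢ Vc) with hD'
    have hD'sub : D' ⊆ C₁ ×ˢ C₂ := inter_subset_left.trans hD
    have hD'conv : Convex ℝ D' := hDconv.inter (convex_univ.prod hVcconv)
    have hxD' : x ∈ closure D' := by
      rw [mem_closure_iff_nhds] at hx ⊢
      intro N hN
      have hprod : (Set.univ ×ˢ Vc : Set (E₁ × E₂)) ∈ 𝓝 x := by
        have := prod_mem_nhds (univ_mem : (Set.univ : Set E₁) ∈ 𝓝 x.1) hVcnhds
        rwa [Prod.mk.eta] at this
      obtain ⟨p, hp1, hp2⟩ := hx _ (inter_mem hN hprod)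
      exact ⟨p, hp1.1, hp2, hp1.2⟩
    have hx1D' : x.1 ∈ closure (Prod.fst '' D') :=
      image_closure_subset_closure_image continuous_fst ⟨x, hxD', rfl⟩
    obtain ⟨S, hSD', hSc, y', hy'C, hy'K⟩ :=
      aux_step1 h₁c h₂c h₁ hD'sub hD'conv hx1D'
    have hy'V : y' ∈ Vc := by
      have hmem : (x.1, y') ∈ closure D' :=
        closure_mono (convexHull_min hSD' hD'conv) hy'K
      have hsub2 : closure D' ⊆ Set.univ ×ˢ Vc :=
        closure_minimal inter_subset_right (isClosed_univ.prod hVcclosed)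
      exact (hsub2 hmem).2
    exact ⟨y', hVcU hy'V, hy'C, S, hSD'.trans inter_subset_left, hSc, hy'K⟩
  obtain ⟨G₀, hG₀G, hG₀c, hx2⟩ := h₂ G hGsub hGconv x.2 hGcl
  haveI := hG₀c.to_subtype
  have hch : ∀ g : G₀, ∃ S : Set (E₁ × E₂),
      S ⊆ D ∧ S.Countable ∧ (x.1, (g : E₂)) ∈ closure (convexHull ℝ S) :=
    fun g => (hG₀G g.2).2
  choose Sf hSfD hSfc hSfmem using hch
  set S : Set (E₁ × E₂) := ⋃ g : G₀, Sf g with hSdef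
  have hSD : S ⊆ D := iUnion_subset hSfD
  have hSc : S.Countable := countable_iUnion hSfc
  have hxS : x ∈ closure (convexHull ℝ S) := by
    have hsub : (({x.1} : Set E₁) ×ˢ G₀) ⊆ closure (convexHull ℝ S) := by
      rintro ⟨a, b⟩ ⟨ha, hb⟩
      rw [mem_singleton_iff] at ha
      subst ha
      exact closure_mono (convexHull_mono (subset_iUnion Sf ⟨b, hb⟩)) (hSfmem ⟨b, hb⟩)
    have hxcl : x ∈ closure (({x.1} : Set E₁) ×ˢ G₀) := by
      rw [closure_prod_eq]
      exact ⟨subset_closure rfl, hx2⟩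
    exact (closure_minimal hsub isClosed_closure) hxcl
  obtain ⟨T, hTsub, hTc, hTcl⟩ := aux_exists_countable_ratHull S hSc
  exact ⟨T, hTsub.trans (convexHull_min hSD hDconv), hTc,
    (closure_minimal hTcl isClosed_closure) hxS⟩
end

section
/- Let Γ be a nonempty set and 1 < p, q < ∞ with 1/p + 1/q ≥ 1. In the projective tensor product ℓ_p(Γ) ⊗̂_π ℓ_q(Γ), the family {e_i ⊗ ẽ_i : i ∈ Γ} (where (e_i) and (ẽ_i) are the canonical unit vector bases) is isometrically equivalent to the canonical basis of ℓ₁(Γ): for every finite F ⊆ Γ and scalars (λ_i)_{i∈F}, the projective tensor norm of Σ_{i∈F} λ_i e_i ⊗ ẽ_i equals Σ_{i∈F} |λ_i|. -/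
open TensorProduct
open scoped ENNReal

variable {X Y : Type*} [NormedAddCommGroup X] [NormedSpace ℝ X]
  [NormedAddCommGroup Y] [NormedSpace ℝ Y]

/-- A continuous bilinear form, viewed as a plain bilinear map. -/
noncomputable def bilinL (X Y : Type*) [NormedAddCommGroup X] [NormedSpace ℝ X]
    [NormedAddCommGroup Y] [NormedSpace ℝ Y] :
    (X →L[ℝ] Y →L[ℝ] ℝ) →ₗ[ℝ] (X →ₗ[ℝ] Y →ₗ[ℝ] ℝ) :=
  (LinearMap.llcomp ℝ X (Y →L[ℝ] ℝ) (Y →ₗ[ℝ] ℝ) (ContinuousLinearMap.coeLM ℝ)) ∘ₗ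
    ContinuousLinearMap.coeLM ℝ

/-- The linear functional on `X ⊗ Y` induced by a continuous bilinear form `S`,
i.e. the action of `S` on tensors. -/
noncomputable def tensorEval (X Y : Type*) [NormedAddCommGroup X] [NormedSpace ℝ X]
    [NormedAddCommGroup Y] [NormedSpace ℝ Y] :
    (X →L[ℝ] Y →L[ℝ] ℝ) →ₗ[ℝ] (X ⊗[ℝ] Y →ₗ[ℝ] ℝ) :=
  (TensorProduct.lift.equiv (RingHom.id ℝ) X Y ℝ).toLinearMap ∘ₗ bilinL X Y

/-- The projective tensor norm on `X ⊗ Y`: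
`‖u‖_π = sup {|S(u)| : S a continuous bilinear form on X × Y, ‖S‖ ≤ 1}`. -/
noncomputable def projNorm (u : X ⊗[ℝ] Y) : ℝ :=
  sSup {r : ℝ | ∃ S : X →L[ℝ] Y →L[ℝ] ℝ, ‖S‖ ≤ 1 ∧ r = |tensorEval X Y S u|}

lemma tensorEval_tmul (S : X →L[ℝ] Y →L[ℝ] ℝ) (x : X) (y : Y) :
    tensorEval X Y S (x ⊗ₜ[ℝ] y) = S x y := by simp [tensorEval, bilinL]

/-- Key Hölder-type bound: under `1/p + 1/q ≥ 1`, partial sums of `|x i| |y i|`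
are bounded by `‖x‖_p ‖y‖_q`. -/
lemma key_bound {Γ : Type*} {p q : ℝ≥0∞} [Fact (1 ≤ p)] [Fact (1 ≤ q)]
    (hp : 1 < p.toReal) (hq : 1 < q.toReal) (hpq : 1 ≤ 1 / p.toReal + 1 / q.toReal)
    (F : Finset Γ) (x : lp (fun _ : Γ => ℝ) p) (y : lp (fun _ : Γ => ℝ) q) :
    ∑ i ∈ F, |x i| * |y i| ≤ ‖x‖ * ‖y‖ := by
  set pr := p.toReal with hprdef
  set qr := q.toReal with hqrdef
  set r := Real.conjExponent pr with hrdef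
  have hconj : pr.HolderConjugate r := Real.HolderConjugate.conjExponent hp
  have hprpos : 0 < pr := hconj.pos
  have hrpos : 0 < r := hconj.symm.pos
  have hqrpos : 0 < qr := lt_trans one_pos hq
  have hqr_le_r : qr ≤ r := by
    have h1 : 1 / r ≤ 1 / qr := by
      have := hconj.inv_add_inv_eq_one
      rw [one_div, one_div] at hpq ⊢
      linarith
    rwa [one_div, one_div, inv_le_inv₀ hrpos hqrpos] at h1
  have hH : ∑ i ∈ F, |x i| * |y i| ≤
      (∑ i ∈ F, |x i| ^ pr) ^ (1 / pr) * (∑ i ∈ F, |y i| ^ r) ^ (1 / r) :=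
    Real.inner_le_Lp_mul_Lq_of_nonneg F hconj (fun i _ => abs_nonneg _) (fun i _ => abs_nonneg _)
  have hx : (∑ i ∈ F, |x i| ^ pr) ^ (1 / pr) ≤ ‖x‖ := by
    have h1 : ∑ i ∈ F, |x i| ^ pr ≤ ‖x‖ ^ pr := by
      simpa [Real.norm_eq_abs] using lp.sum_rpow_le_norm_rpow hprpos x F
    calc (∑ i ∈ F, |x i| ^ pr) ^ (1 / pr) ≤ (‖x‖ ^ pr) ^ (1 / pr) :=
          Real.rpow_le_rpow (Finset.sum_nonneg fun i _ => Real.rpow_nonneg (abs_nonneg _) _) h1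
            (by positivity)
      _ = ‖x‖ := by
          rw [← Real.rpow_mul (norm_nonneg x), mul_one_div_cancel hprpos.ne', Real.rpow_one]
  have hy : (∑ i ∈ F, |y i| ^ r) ^ (1 / r) ≤ ‖y‖ := by
    have hq0 : q ≠ 0 := by
      intro h; rw [hqrdef, h, ENNReal.toReal_zero] at hqrpos; exact lt_irrefl 0 hqrpos
    have hyle : ∀ i, |y i| ≤ ‖y‖ := fun i => by
      simpa [Real.norm_eq_abs] using lp.norm_apply_le_norm hq0 y i
    have h1 : ∑ i ∈ F, |y i| ^ r ≤ ‖y‖ ^ r := by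
      have step : ∀ i ∈ F, |y i| ^ r ≤ ‖y‖ ^ (r - qr) * |y i| ^ qr := by
        intro i _
        rcases eq_or_lt_of_le (abs_nonneg (y i)) with h0 | h0
        · rw [← h0, Real.zero_rpow hrpos.ne', Real.zero_rpow hqrpos.ne', mul_zero]
        · have : |y i| ^ r = |y i| ^ (r - qr) * |y i| ^ qr := by
            rw [← Real.rpow_add h0, sub_add_cancel]
          rw [this]
          exact mul_le_mul_of_nonneg_right
            (Real.rpow_le_rpow (abs_nonneg _) (hyle i) (sub_nonneg.2 hqr_le_r))
            (Real.rpow_nonneg (abs_nonneg _) _)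
      calc ∑ i ∈ F, |y i| ^ r ≤ ∑ i ∈ F, ‖y‖ ^ (r - qr) * |y i| ^ qr :=
            Finset.sum_le_sum step
        _ = ‖y‖ ^ (r - qr) * ∑ i ∈ F, |y i| ^ qr := by rw [Finset.mul_sum]
        _ ≤ ‖y‖ ^ (r - qr) * ‖y‖ ^ qr := by
            refine mul_le_mul_of_nonneg_left ?_ (Real.rpow_nonneg (norm_nonneg _) _)
            simpa [Real.norm_eq_abs] using lp.sum_rpow_le_norm_rpow hqrpos y F
        _ = ‖y‖ ^ r := by
            rw [← Real.rpow_add' (norm_nonneg _) (by rw [sub_add_cancel]; exact hrpos.ne')]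
            rw [sub_add_cancel]
    calc (∑ i ∈ F, |y i| ^ r) ^ (1 / r) ≤ (‖y‖ ^ r) ^ (1 / r) :=
          Real.rpow_le_rpow (Finset.sum_nonneg fun i _ => Real.rpow_nonneg (abs_nonneg _) _) h1
            (by positivity)
      _ = ‖y‖ := by
          rw [← Real.rpow_mul (norm_nonneg y), mul_one_div_cancel hrpos.ne', Real.rpow_one]
  calc ∑ i ∈ F, |x i| * |y i| ≤ _ := hH
    _ ≤ ‖x‖ * ‖y‖ := mul_le_mul hx hy (Real.rpow_nonneg
        (Finset.sum_nonneg fun i _ => Real.rpow_nonneg (abs_nonneg _) _) _) (norm_nonneg _)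

/-- The diagonal bilinear form with signs `eps`, supported on a finite set `F`. -/
noncomputable def diagBilin {Γ : Type*} (p q : ℝ≥0∞) [Fact (1 ≤ p)] [Fact (1 ≤ q)]
    (F : Finset Γ) (eps : Γ → ℝ) :
    lp (fun _ : Γ => ℝ) p →ₗ[ℝ] lp (fun _ : Γ => ℝ) q →ₗ[ℝ] ℝ :=
  LinearMap.mk₂ ℝ (fun x y => ∑ i ∈ F, eps i * (x i * y i))
    (fun x x' y => by
      simp only [lp.coeFn_add, Pi.add_apply, ← Finset.sum_add_distrib]
      exact Finset.sum_congr rfl fun i _ => by ring)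
    (fun c x y => by
      simp only [lp.coeFn_smul, Pi.smul_apply, smul_eq_mul, Finset.mul_sum]
      exact Finset.sum_congr rfl fun i _ => by ring)
    (fun x y y' => by
      simp only [lp.coeFn_add, Pi.add_apply, ← Finset.sum_add_distrib]
      exact Finset.sum_congr rfl fun i _ => by ring)
    (fun c x y => by
      simp only [lp.coeFn_smul, Pi.smul_apply, smul_eq_mul, Finset.mul_sum]
      exact Finset.sum_congr rfl fun i _ => by ring)

@[simp] lemma diagBilin_apply {Γ : Type*} {p q : ℝ≥0∞} [Fact (1 ≤ p)] [Fact (1 ≤ q)]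
    (F : Finset Γ) (eps : Γ → ℝ)
    (x : lp (fun _ : Γ => ℝ) p) (y : lp (fun _ : Γ => ℝ) q) :
    diagBilin p q F eps x y = ∑ i ∈ F, eps i * (x i * y i) := rfl

/-- Let `Γ` be a nonempty set, `1 < p, q < ∞` with `1/p + 1/q ≥ 1`.
In `ℓ_p(Γ) ⊗̂_π ℓ_q(Γ)`, the family `{e_i ⊗ ẽ_i : i ∈ Γ}` is isometrically equivalent to
the canonical basis of `ℓ₁(Γ)`: for every finite `F ⊆ Γ` and scalars `(λ_i)`, the
projective tensor norm of `Σ_{i∈F} λ_i e_i ⊗ ẽ_i` equals `Σ_{i∈F} |λ_i|`. -/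
theorem projNorm_sum_diagonal_lp (Γ : Type*) [Nonempty Γ] [DecidableEq Γ] (p q : ℝ≥0∞)
    (hp1 : 1 < p) (hp2 : p < ⊤) (hq1 : 1 < q) (hq2 : q < ⊤)
    [Fact (1 ≤ p)] [Fact (1 ≤ q)]
    (hpq : 1 ≤ 1 / p + 1 / q)
    (F : Finset Γ) (lam : Γ → ℝ) :
    projNorm ((∑ i ∈ F, lam i •
        ((lp.single p i (1 : ℝ) : lp (fun _ : Γ => ℝ) p) ⊗ₜ[ℝ]
         (lp.single q i (1 : ℝ) : lp (fun _ : Γ => ℝ) q))) :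
        (lp (fun _ : Γ => ℝ) p) ⊗[ℝ] (lp (fun _ : Γ => ℝ) q)) =
      ∑ i ∈ F, |lam i| := by
  set X' := lp (fun _ : Γ => ℝ) p
  set Y' := lp (fun _ : Γ => ℝ) q
  have hpr : 1 < p.toReal := by
    have := (ENNReal.toReal_lt_toReal ENNReal.one_ne_top hp2.ne).mpr hp1
    simpa using this
  have hqr : 1 < q.toReal := by
    have := (ENNReal.toReal_lt_toReal ENNReal.one_ne_top hq2.ne).mpr hq1
    simpa using this
  have hprpos : 0 < p.toReal := lt_trans one_pos hpr
  have hqrpos : 0 < q.toReal := lt_trans one_pos hqr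
  have hpqr : 1 ≤ 1 / p.toReal + 1 / q.toReal := by
    have hpne : 1 / p ≠ ⊤ := by
      simp only [one_div, ne_eq, ENNReal.inv_eq_top]
      exact (lt_trans zero_lt_one hp1).ne'
    have hqne : 1 / q ≠ ⊤ := by
      simp only [one_div, ne_eq, ENNReal.inv_eq_top]
      exact (lt_trans zero_lt_one hq1).ne'
    have := (ENNReal.toReal_le_toReal ENNReal.one_ne_top
      (by exact ENNReal.add_ne_top.2 ⟨hpne, hqne⟩)).mpr hpq
    rw [ENNReal.toReal_one, ENNReal.toReal_add hpne hqne] at this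
    simpa [one_div, ENNReal.toReal_inv] using this
  -- unit vectors
  set e : Γ → X' := fun i => lp.single p i (1 : ℝ)
  set f : Γ → Y' := fun i => lp.single q i (1 : ℝ)
  have he : ∀ i, ‖e i‖ = 1 := fun i => by
    simpa using lp.norm_single (E := fun _ : Γ => ℝ) (lt_trans zero_lt_one hp1) i (1 : ℝ)
  have hf : ∀ i, ‖f i‖ = 1 := fun i => by
    simpa using lp.norm_single (E := fun _ : Γ => ℝ) (lt_trans zero_lt_one hq1) i (1 : ℝ)
  set u : X' ⊗[ℝ] Y' := ∑ i ∈ F, lam i • (e i ⊗ₜ[ℝ] f i)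
  set T : ℝ := ∑ i ∈ F, |lam i|
  have hT0 : 0 ≤ T := Finset.sum_nonneg fun i _ => abs_nonneg _
  -- evaluation formula
  have heval : ∀ S : X' →L[ℝ] Y' →L[ℝ] ℝ,
      tensorEval X' Y' S u = ∑ i ∈ F, lam i * S (e i) (f i) := by
    intro S
    simp only [u, map_sum, map_smul, tensorEval_tmul, smul_eq_mul]
  -- upper bound
  have hub : ∀ r ∈ {r : ℝ | ∃ S : X' →L[ℝ] Y' →L[ℝ] ℝ, ‖S‖ ≤ 1 ∧
      r = |tensorEval X' Y' S u|}, r ≤ T := by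
    rintro r ⟨S, hS, rfl⟩
    rw [heval S]
    calc |∑ i ∈ F, lam i * S (e i) (f i)| ≤ ∑ i ∈ F, |lam i * S (e i) (f i)| :=
          Finset.abs_sum_le_sum_abs _ _
      _ ≤ ∑ i ∈ F, |lam i| := by
          refine Finset.sum_le_sum fun i _ => ?_
          rw [abs_mul]
          have h1 : |S (e i) (f i)| ≤ 1 := by
            have := S.le_opNorm₂ (e i) (f i)
            rw [he i, hf i] at this
            simpa [Real.norm_eq_abs] using this.trans (by simpa using hS)
          calc |lam i| * |S (e i) (f i)| ≤ |lam i| * 1 :=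
                mul_le_mul_of_nonneg_left h1 (abs_nonneg _)
            _ = |lam i| := mul_one _
  -- the witness bilinear form
  set eps : Γ → ℝ := fun i => if 0 ≤ lam i then 1 else -1
  have heps_abs : ∀ i, |eps i| = 1 := fun i => by
    simp only [eps]; split <;> simp
  have hbound : ∀ (x : X') (y : Y'),
      ‖diagBilin p q F eps x y‖ ≤ 1 * ‖x‖ * ‖y‖ := by
    intro x y
    rw [diagBilin_apply, Real.norm_eq_abs, one_mul]
    calc |∑ i ∈ F, eps i * (x i * y i)| ≤ ∑ i ∈ F, |eps i * (x i * y i)| :=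
          Finset.abs_sum_le_sum_abs _ _
      _ = ∑ i ∈ F, |x i| * |y i| := by
          refine Finset.sum_congr rfl fun i _ => ?_
          rw [abs_mul, heps_abs i, one_mul, abs_mul]
      _ ≤ ‖x‖ * ‖y‖ := key_bound hpr hqr hpqr F x y
  set S₀ : X' →L[ℝ] Y' →L[ℝ] ℝ := LinearMap.mkContinuous₂ (diagBilin p q F eps) 1 hbound
  have hS₀norm : ‖S₀‖ ≤ 1 := LinearMap.mkContinuous₂_norm_le _ zero_le_one _
  have hS₀eval : tensorEval X' Y' S₀ u = T := by
    rw [heval S₀]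
    refine Finset.sum_congr rfl fun j hj => ?_
    have hSval : S₀ (e j) (f j) = eps j := by
      have : S₀ (e j) (f j) = ∑ i ∈ F, eps i * (e j i * f j i) := rfl
      rw [this]
      rw [Finset.sum_eq_single j]
      · simp [e, f, lp.single_apply_self]
      · intro i hiF hij
        have h1 : (e j : ∀ _ : Γ, ℝ) i = 0 := by
          simp only [e]; exact lp.single_apply_ne (E := fun _ : Γ => ℝ) p j (1 : ℝ) hij
        simp [h1]
      · intro h; exact absurd hj h
    rw [hSval]
    simp only [eps]
    split
    · rename_i h; rw [mul_one, abs_of_nonneg h]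
    · rename_i h; rw [mul_neg_one, abs_of_neg (lt_of_not_ge h)]
  have hmem : T ∈ {r : ℝ | ∃ S : X' →L[ℝ] Y' →L[ℝ] ℝ, ‖S‖ ≤ 1 ∧
      r = |tensorEval X' Y' S u|} := ⟨S₀, hS₀norm, by rw [hS₀eval, abs_of_nonneg hT0]⟩
  refine le_antisymm (Real.sSup_le hub hT0) (le_csSup ⟨T, fun r hr => hub r hr⟩ hmem)
end

section
/- Let X and Y be Banach spaces such that every bounded linear operator from X to Y* maps weakly compact subsets of X onto Y-limited subsets of Y* (where H ⊆ Y* is Y-limited if every weakly null sequence in Y converges to 0 uniformly on H). Then for any weakly null sequences (xₙ) in X and (yₙ) in Y, the sequence (xₙ ⊗ yₙ) is weakly null in the projective tensor product X ⊗̂_π Y. -/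
open Filter Topology NormedSpace

/-- A sequence in a normed space is weakly null if it tends to `0` in the weak topology,
i.e. `f (y n) → 0` for every continuous linear functional `f`. -/
def WeaklyNullSeq {Y : Type*} [NormedAddCommGroup Y] [NormedSpace ℝ Y] (y : ℕ → Y) : Prop :=
  ∀ f : Y →L[ℝ] ℝ, Tendsto (fun n => f (y n)) atTop (𝓝 0)

/-- A set `H ⊆ Y*` is `Y`-limited if every weakly null sequence in `Y` converges to `0`
uniformly on `H`. -/
def YLimited {Y : Type*} [NormedAddCommGroup Y] [NormedSpace ℝ Y]
    (H : Set (Y →L[ℝ] ℝ)) : Prop :=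
  ∀ y : ℕ → Y, WeaklyNullSeq y →
    ∀ ε > (0 : ℝ), ∃ N : ℕ, ∀ n ≥ N, ∀ f ∈ H, |f (y n)| ≤ ε

/-- Let `X, Y` be Banach spaces such that every bounded linear operator
from `X` to `Y*` maps weakly compact subsets of `X` onto `Y`-limited subsets of `Y*`.
Then for any weakly null sequences `(xₙ)` in `X` and `(yₙ)` in `Y`, the sequence
`(xₙ ⊗ yₙ)` is weakly null in `X ⊗̂_π Y`; equivalently (identifying the dual of
`X ⊗̂_π Y` with the continuous bilinear forms on `X × Y`), `S (xₙ) (yₙ) → 0` for every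
continuous bilinear form `S`. -/
theorem tensor_weaklyNull_of_weaklyCompact_to_limited
    {X Y : Type*} [NormedAddCommGroup X] [NormedSpace ℝ X] [CompleteSpace X]
    [NormedAddCommGroup Y] [NormedSpace ℝ Y] [CompleteSpace Y]
    (h : ∀ (T : X →L[ℝ] (Y →L[ℝ] ℝ)) (W : Set X),
      IsCompact (toWeakSpace ℝ X '' W) → YLimited (T '' W))
    (x : ℕ → X) (hx : WeaklyNullSeq x) (y : ℕ → Y) (hy : WeaklyNullSeq y) :
    ∀ S : X →L[ℝ] (Y →L[ℝ] ℝ), Tendsto (fun n => S (x n) (y n)) atTop (𝓝 (0 : ℝ)) := by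
  intro S
  -- the weakly compact set
  set W : Set X := insert 0 (Set.range x) with hW
  have hinj : Function.Injective ((topDualPairing ℝ X).flip) := by
    intro a b hab
    rw [← sub_eq_zero]
    apply NormedSpace.eq_zero_of_forall_dual_eq_zero ℝ
    intro f
    have := congrArg (fun g => g f) hab
    simp only [LinearMap.flip_apply] at this
    simp [map_sub, this, sub_eq_zero]
    exact this
  have hcomp : IsCompact (toWeakSpace ℝ X '' W) := by
    have htend : Tendsto (fun n => toWeakSpace ℝ X (x n)) atTop
        (𝓝 (toWeakSpace ℝ X 0)) := by
      refine (WeakBilin.tendsto_iff_forall_eval_tendsto (B := (topDualPairing ℝ X).flip)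
        (f := fun n => toWeakSpace ℝ X (x n)) (x := toWeakSpace ℝ X 0) hinj).2 ?_
      intro f
      have := hx f
      convert this using 2
      · rfl
      · exact map_zero f
    have := htend.isCompact_insert_range
    convert this using 1
    rw [hW, Set.image_insert_eq, ← Set.range_comp]
    simp [Function.comp_def]
  have hlim := h S W hcomp
  rw [Metric.tendsto_atTop]
  intro ε hε
  obtain ⟨N, hN⟩ := hlim y hy (ε / 2) (by linarith)
  refine ⟨N, fun n hn => ?_⟩
  have hmem : S (x n) ∈ S '' W := ⟨x n, Or.inr ⟨n, rfl⟩, rfl⟩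
  have := hN n hn (S (x n)) hmem
  rw [Real.dist_eq]
  simp only [sub_zero]
  linarith
end
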